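/- arXiv:2512.22456 — 2 statements merged into one kernel-verified Lean document; each statement's English description precedes it below -/
import Mathlib

section
/- Let G be a finite group acting transitively on Ω = [G:M] with point stabilizer M. If Q̌(G) < 1/2, then for any two points α, β ∈ Ω there exists γ ∈ Ω such that G_α ∩ G_γ = 1 and G_β ∩ G_γ = 1; that is, any two vertices of the Saxl graph Σ(G) have a common neighbour. -/
open Matrix MulAction

namespace BG

/-! ### Unitary groups -/

section Unitary

variable (F : Type) [Field F] [StarRing F]

/-- The general unitary group `GU(3,q)` w.r.t. the Hermitian form with identity Gram matrix. -/
abbrev GU3 : Type := Matrix.unitaryGroup (Fin 3) F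

/-- The special unitary group `SU(3,q)` as a subgroup of `GU(3,q)`. -/
def SU3 : Subgroup (GU3 F) where
  carrier := {A | ((A : Matrix (Fin 3) (Fin 3) F)).det = 1}
  one_mem' := by simp [Set.mem_setOf_eq]
  mul_mem' := by
    intro a b ha hb
    simp only [Set.mem_setOf_eq] at *
    rw [Matrix.UnitaryGroup.mul_val, Matrix.det_mul, ha, hb, one_mul]
  inv_mem' := by
    intro a ha
    simp only [Set.mem_setOf_eq] at *
    rw [Matrix.UnitaryGroup.inv_val, Matrix.star_eq_conjTranspose, Matrix.det_conjTranspose, ha,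
      star_one]

/-- The projective general unitary group `PGU(3,q) = GU(3,q)/Z(GU(3,q))`. -/
abbrev PGU3 : Type := GU3 F ⧸ Subgroup.center (GU3 F)

/-- The projective special unitary group `PSU(3,q) = SU(3,q)/Z(SU(3,q))`. -/
abbrev PSU3 : Type := ↥(SU3 F) ⧸ Subgroup.center ↥(SU3 F)

/-- `PSU(3,q)` identified with a (normal) subgroup of `PGU(3,q)`: the image of `SU(3,q)`. -/
def Tsub : Subgroup (PGU3 F) :=
  (SU3 F).map (QuotientGroup.mk' (Subgroup.center (GU3 F)))

/-- The Hermitian form on `F³` (identity Gram matrix). -/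
def hermForm (u v : Fin 3 → F) : F := ∑ i, star (u i) * v i

end Unitary

/-- `SO(3,q)`: the special orthogonal group of a 3-dimensional space over `K`,
realized as the orthogonal (= unitary for the trivial star) matrices of determinant 1. -/
def SO3 (K : Type) [Field K] : Subgroup (@Matrix.unitaryGroup (Fin 3) _ _ K _ starRingOfComm) :=
  @SU3 K _ starRingOfComm

/-- `PSL(2,R)`. -/
abbrev PSL2 (R : Type) [CommRing R] : Type :=
  Matrix.SpecialLinearGroup (Fin 2) R ⧸ Subgroup.center (Matrix.SpecialLinearGroup (Fin 2) R)

/-! ### Permutation group notions -/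

section Perm

variable (G : Type) [Group G] (Ω : Type) [MulAction G Ω]

/-- The union of the regular suborbits of `G` relative to `α`; equivalently, the
neighbourhood of `α` in the Saxl graph (when `b(G) = 2`). -/
def SaxlNbr (α : Ω) : Set Ω := {β | stabilizer G α ⊓ stabilizer G β = ⊥}

/-- `Γ ∩ Γ^g ≠ ∅` for all `g ∈ G`, where `Γ` is the union of the regular suborbits
relative to any point `α`. -/
def BGProp : Prop :=
  ∀ (α : Ω) (g : G), ∃ γ, γ ∈ SaxlNbr G Ω α ∧ γ ∈ (fun x => g • x) '' SaxlNbr G Ω α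

/-- The base size of `G` on `Ω` equals two: some pair of points is a base,
but no single point is. -/
def BaseSizeTwo : Prop :=
  (∃ α β : Ω, stabilizer G α ⊓ stabilizer G β = ⊥) ∧ ∀ α : Ω, stabilizer G α ≠ ⊥

/-- A primitive action: transitive, and every block is trivial. -/
def IsPrimitiveAction : Prop :=
  MulAction.IsPretransitive G Ω ∧
    ∀ B : Set Ω, MulAction.IsBlock G B → B.Subsingleton ∨ B = Set.univ

end Perm

/-- A minimal normal subgroup. -/
def IsMinimalNormal {G : Type} [Group G] (N : Subgroup G) : Prop :=
  N.Normal ∧ N ≠ ⊥ ∧ ∀ K : Subgroup G, K.Normal → K ≠ ⊥ → K ≤ N → K = N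

/-- The socle of a group: the subgroup generated by all minimal normal subgroups. -/
def socle (G : Type) [Group G] : Subgroup G :=
  sSup {N : Subgroup G | IsMinimalNormal N}

/-! ### The quantity `Q̌(G)` -/

section Qcheck

variable (G : Type) [Group G]

/-- `S` is a set of representatives of the `M`-conjugacy classes of subgroups of prime
order of `M`. -/
def IsPrimeOrderClassReps (M : Subgroup G) (S : Finset (Subgroup G)) : Prop :=
  (∀ H ∈ S, H ≤ M ∧ (Nat.card H).Prime) ∧
    ∀ K : Subgroup G, K ≤ M → (Nat.card K).Prime →
      ∃! H, H ∈ S ∧ ∃ g ∈ M, K.map (MulAut.conj g).toMonoidHom = H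

variable (Ω : Type) [MulAction G Ω]

/-- The number of points of `Ω` fixed by (every element of) `H`. -/
noncomputable def nFix (H : Subgroup G) : ℕ :=
  Nat.card {ω : Ω // ∀ h ∈ H, h • ω = ω}

/-- The quantity `Q̌(G)` relative to a point stabilizer `M` and a set `S` of
representatives of the conjugacy classes of prime order subgroups of `M`. -/
noncomputable def Qcheck (M : Subgroup G) (S : Finset (Subgroup G)) : ℚ :=
  ((Nat.card M : ℚ) / (Nat.card Ω)) *
    ∑ H ∈ S, ((Nat.card H : ℚ) - 1) * (nFix G Ω H) / (Nat.card ↥(M ⊓ Subgroup.normalizer (H : Set G)))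

end Qcheck

/-! ### `PΓU(3,q)` as a semidirect product -/

section Gamma

variable (F : Type) [Field F] [StarRing F]

/-- The statement that `fbar` is the automorphism of `PGU(3,q)` induced by the
field automorphism `x ↦ x^p` applied entrywise. -/
def IsFrobOnPGU (p : ℕ) (fbar : MulAut (PGU3 F)) : Prop :=
  ∀ A B : GU3 F,
    ((B : Matrix (Fin 3) (Fin 3) F) = (A : Matrix (Fin 3) (Fin 3) F).map (fun x => x ^ p)) →
      fbar (QuotientGroup.mk A) = (QuotientGroup.mk B : PGU3 F)

/-- `PΓU(3,q) = PGU(3,q) ⋊ ⟨f⟩`. -/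
abbrev PGammaU3 (fbar : MulAut (PGU3 F)) : Type :=
  SemidirectProduct (PGU3 F) ↥(Subgroup.zpowers fbar) (Subgroup.zpowers fbar).subtype

/-- The field automorphism `f` as an element of `PΓU(3,q)`. -/
def fElem (fbar : MulAut (PGU3 F)) : PGammaU3 F fbar :=
  SemidirectProduct.inr ⟨fbar, Subgroup.mem_zpowers fbar⟩

/-- The subgroup `PGU(3,q'):⟨f⟩` of `PΓU(3,q)`, generated by the embedded copy of
`PGU(3,q')` (the centralizer of `f^(2m')` in `PGU(3,q)`) together with `f`. -/
def MGamma (fbar : MulAut (PGU3 F)) (m' : ℕ) : Subgroup (PGammaU3 F fbar) :=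
  Subgroup.closure
    ((SemidirectProduct.inl '' {x : PGU3 F | (fbar ^ (2 * m')) x = x}) ∪ {fElem F fbar})

/-- The subgroup `PΣU(3,q) = PSU(3,q) ⋊ ⟨f⟩` of `PΓU(3,q)`, generated by the image of
`PSU(3,q)` together with `f`. -/
def GSigma (fbar : MulAut (PGU3 F)) : Subgroup (PGammaU3 F fbar) :=
  Subgroup.closure
    ((SemidirectProduct.inl '' (Tsub F : Set (PGU3 F))) ∪ {fElem F fbar})

end Gamma

end BG

namespace BG

/-- `A` stabilizes the projective point (line) spanned by `v`. -/
def stabsLine (F : Type) [Field F] [StarRing F] (A : GU3 F) (v : Fin 3 → F) : Prop :=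
  ∃ c : F, c ≠ 0 ∧ (A : Matrix (Fin 3) (Fin 3) F).mulVec v = c • v

/-- `z` is a regular unipotent element of `T = PSU(3,q)`: it has order `p` and is not
conjugate into the center of a Sylow `p`-subgroup. -/
def IsRegUnip (F : Type) [Field F] [StarRing F] (p : ℕ) (z : ↥(Tsub F)) : Prop :=
  orderOf z = p ∧ ∀ (g : ↥(Tsub F)) (P : Sylow p ↥(Tsub F)),
    g * z * g⁻¹ ∉ (P : Subgroup ↥(Tsub F)) ⊓
      Subgroup.centralizer ((P : Subgroup ↥(Tsub F)) : Set ↥(Tsub F))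

end BG



open MulAction

namespace BGAux

variable {G : Type} [Group G] {Ω : Type} [MulAction G Ω]

instance conjAction : MulAction G (Subgroup G) where
  smul g H := H.map (MulAut.conj g).toMonoidHom
  one_smul H := by
    show H.map _ = H
    ext x
    simp [Subgroup.mem_map]
  mul_smul g h H := by
    show H.map _ = (H.map _).map _
    rw [Subgroup.map_map]
    congr 1
    ext x
    simp [MulAut.conj_apply, mul_assoc]

lemma smul_subgroup_def (g : G) (H : Subgroup G) :
    g • H = H.map (MulAut.conj g).toMonoidHom := rfl

lemma mem_smul_subgroup {g x : G} {H : Subgroup G} :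
    x ∈ g • H ↔ ∃ h ∈ H, g * h * g⁻¹ = x := by
  simp [smul_subgroup_def, Subgroup.mem_map, MulAut.conj_apply]

lemma smul_subgroup_eq_iff {g : G} {H : Subgroup G} :
    g • H = H ↔ g ∈ Subgroup.normalizer (H : Set G) := by
  constructor
  · intro he
    rw [Subgroup.mem_normalizer_iff]
    intro h
    constructor
    · intro hh
      rw [← he]
      exact mem_smul_subgroup.mpr ⟨h, hh, rfl⟩
    · intro hgh
      rw [← he] at hgh
      obtain ⟨h', hh', heq⟩ := mem_smul_subgroup.mp hgh
      have : h' = h := by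
        have h3 : g * h' = g * h := mul_right_cancel heq
        exact mul_left_cancel h3
      exact this ▸ hh'
  · intro hn
    ext x
    rw [mem_smul_subgroup]
    constructor
    · rintro ⟨h, hh, rfl⟩
      exact (Subgroup.mem_normalizer_iff.mp hn h).mp hh
    · intro hx
      refine ⟨g⁻¹ * x * g, ?_, by group⟩
      have := (Subgroup.mem_normalizer_iff.mp hn (g⁻¹ * x * g)).symm
      rw [Subgroup.mem_normalizer_iff] at hn
      have h2 := (hn (g⁻¹ * x * g)).mpr
      apply h2
      have : g * (g⁻¹ * x * g) * g⁻¹ = x := by group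
      rw [this]
      exact hx


lemma coe_smul_subgroup (M : Subgroup G) (m : ↥M) (H : Subgroup G) :
    m • H = (m : G) • H := rfl

/-- The stabilizer of `H` under conjugation by `M` is `M ⊓ N(H)`. -/
noncomputable def stabEquiv (M H : Subgroup G) :
    MulAction.stabilizer ↥M H ≃ ↥(M ⊓ Subgroup.normalizer (H : Set G)) where
  toFun x := ⟨(x : ↥M), (x : ↥M).2, smul_subgroup_eq_iff.mp x.2⟩
  invFun y := ⟨⟨(y : G), y.2.1⟩, by
    show (⟨(y : G), y.2.1⟩ : ↥M) • H = H
    rw [coe_smul_subgroup]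
    exact smul_subgroup_eq_iff.mpr y.2.2⟩
  left_inv x := rfl
  right_inv y := rfl

lemma card_stab_eq (M H : Subgroup G) :
    Nat.card (MulAction.stabilizer ↥M H) = Nat.card ↥(M ⊓ Subgroup.normalizer (H : Set G)) :=
  Nat.card_congr (stabEquiv M H)

lemma card_orbit_mul [Finite G] (M H : Subgroup G) :
    Nat.card (orbit ↥M H) * Nat.card ↥(M ⊓ Subgroup.normalizer (H : Set G)) = Nat.card ↥M := by
  haveI : Finite (orbit ↥M H) := (Set.finite_range _).to_subtype
  letI : Fintype ↥M := Fintype.ofFinite _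
  letI : Fintype (orbit ↥M H) := Fintype.ofFinite _
  letI : Fintype (MulAction.stabilizer ↥M H) := Fintype.ofFinite _
  rw [← card_stab_eq M H, Nat.card_eq_fintype_card, Nat.card_eq_fintype_card,
    Nat.card_eq_fintype_card]
  exact MulAction.card_orbit_mul_card_stabilizer_eq_card_group ↥M H

/-! ### Fixed point sets -/

def fixSet (Ω : Type) [MulAction G Ω] (H : Subgroup G) : Set Ω := {ω | ∀ h ∈ H, h • ω = ω}

lemma nFix_eq (H : Subgroup G) : BG.nFix G Ω H = (fixSet Ω H).ncard := by
  rw [BG.nFix, ← Nat.card_coe_set_eq]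
  rfl

lemma fixSet_smul (g : G) (H : Subgroup G) :
    fixSet Ω (g • H) = (fun ω => g • ω) '' fixSet Ω H := by
  ext ω
  constructor
  · intro hω
    refine ⟨g⁻¹ • ω, ?_, by simp⟩
    intro h hh
    have h1 : (g * h * g⁻¹) • ω = ω := hω _ (mem_smul_subgroup.mpr ⟨h, hh, rfl⟩)
    have : h • g⁻¹ • ω = g⁻¹ • (g * h * g⁻¹) • ω := by
      simp [smul_smul, mul_assoc]
    rw [this, h1]
  · rintro ⟨ω', hω', rfl⟩ h hh
    obtain ⟨k, hk, rfl⟩ := mem_smul_subgroup.mp hh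
    have : (g * k * g⁻¹) • g • ω' = g • k • ω' := by
      simp [smul_smul, mul_assoc]
    rw [this, hω' k hk]

lemma ncard_fixSet_smul [Finite Ω] (g : G) (H : Subgroup G) :
    (fixSet Ω (g • H)).ncard = (fixSet Ω H).ncard := by
  rw [fixSet_smul, Set.ncard_image_of_injective _ (MulAction.injective g)]

lemma ncard_fixSet_orbit [Finite Ω] {M H K : Subgroup G} (hK : K ∈ orbit ↥M H) :
    (fixSet Ω K).ncard = (fixSet Ω H).ncard := by
  obtain ⟨m, hm⟩ := hK
  rw [← hm]
  show (fixSet Ω ((m : G) • H)).ncard = _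
  rw [ncard_fixSet_smul]

lemma ncard_biUnion_le {ι : Type} [Finite Ω] (s : Finset ι) (f : ι → Set Ω) :
    (⋃ i ∈ s, f i).ncard ≤ ∑ i ∈ s, (f i).ncard := by
  classical
  induction s using Finset.induction with
  | empty => simp
  | insert _ _ h ih =>
    rw [Finset.set_biUnion_insert, Finset.sum_insert h]
    exact le_trans (Set.ncard_union_le _ _) (Nat.add_le_add_left ih _)


lemma exists_prime_order [Finite G] {K : Subgroup G} (h : K ≠ ⊥) :
    ∃ y : G, y ∈ K ∧ (orderOf y).Prime := by
  haveI : Nontrivial ↥K := (Subgroup.nontrivial_iff_ne_bot K).mpr h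
  have h1 : 1 < Nat.card ↥K := Finite.one_lt_card
  obtain ⟨p, hp, hdvd⟩ := Nat.exists_prime_and_dvd (n := Nat.card ↥K) (by omega)
  haveI : Fact p.Prime := ⟨hp⟩
  obtain ⟨x, hx⟩ := exists_prime_orderOf_dvd_card' (G := ↥K) p hdvd
  refine ⟨(x : G), x.2, ?_⟩
  have hco : orderOf (x : G) = orderOf x := orderOf_injective K.subtype K.subtype_injective x
  rw [hco, hx]
  exact hp

variable (G) in
/-- The set of non-neighbours of `α` in the Saxl graph. -/
def Bad (α : Ω) : Set Ω := {γ | stabilizer G α ⊓ stabilizer G γ ≠ ⊥}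

lemma bad_smul (g : G) (α : Ω) : Bad G (g • α) = (fun ω => g • ω) '' Bad G α := by
  have key : ∀ δ : Ω, (stabilizer G (g • α) ⊓ stabilizer G (g • δ) = ⊥) ↔
      (stabilizer G α ⊓ stabilizer G δ = ⊥) := by
    intro δ
    rw [stabilizer_smul_eq_stabilizer_map_conj, stabilizer_smul_eq_stabilizer_map_conj,
      ← Subgroup.map_inf _ _ _ ((MulAut.conj g).injective)]
    exact Subgroup.map_eq_bot_iff_of_injective _ ((MulAut.conj g).injective)
  ext δ
  constructor
  · intro hδ
    refine ⟨g⁻¹ • δ, ?_, smul_inv_smul g δ⟩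
    have k := key (g⁻¹ • δ)
    rw [smul_inv_smul] at k
    exact fun hb => hδ (k.mpr hb)
  · rintro ⟨ω, hω, rfl⟩
    exact fun hb => hω ((key ω).mp hb)

lemma ncard_bad_smul [Finite Ω] (g : G) (α : Ω) :
    (Bad G (g • α)).ncard = (Bad G α).ncard := by
  rw [bad_smul, Set.ncard_image_of_injective _ (MulAction.injective g)]

lemma ncard_bad_le [Finite G] [Finite Ω] (α : Ω) (M : Subgroup G)
    (hM : stabilizer G α = M) (S : Finset (Subgroup G))
    (hS : BG.IsPrimeOrderClassReps G M S) :
    (Bad G α).ncard ≤ ∑ H ∈ S, Nat.card (orbit ↥M H) * BG.nFix G Ω H := by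
  classical
  have hofin : ∀ H : Subgroup G, (orbit ↥M H).Finite := fun H => Set.finite_range _
  have hsub : Bad G α ⊆ ⋃ H ∈ S, ⋃ K ∈ (hofin H).toFinset, fixSet Ω K := by
    intro γ hγ
    obtain ⟨y, hy, hyp⟩ := exists_prime_order (K := stabilizer G α ⊓ stabilizer G γ) hγ
    obtain ⟨hyα, hyγ⟩ := Subgroup.mem_inf.mp hy
    set K := Subgroup.zpowers y with hK
    have hKM : K ≤ M := by rw [← hM]; exact Subgroup.zpowers_le.mpr hyα
    have hKp : (Nat.card ↥K).Prime := by rw [hK, Nat.card_zpowers]; exact hyp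
    obtain ⟨H, ⟨hHS, g, hgM, hgH⟩, _⟩ := hS.2 K hKM hKp
    have hKorb : K ∈ orbit ↥M H := by
      have h1 : (⟨g, hgM⟩ : ↥M) • K = H := hgH
      refine ⟨(⟨g, hgM⟩ : ↥M)⁻¹, ?_⟩
      show _ • H = K
      rw [← h1, inv_smul_smul]
    have hγfix : γ ∈ fixSet Ω K := fun h hh => (Subgroup.zpowers_le.mpr hyγ) hh
    exact Set.mem_iUnion₂.mpr ⟨H, hHS,
      Set.mem_iUnion₂.mpr ⟨K, (hofin H).mem_toFinset.mpr hKorb, hγfix⟩⟩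
  calc (Bad G α).ncard
      ≤ (⋃ H ∈ S, ⋃ K ∈ (hofin H).toFinset, fixSet Ω K).ncard :=
        Set.ncard_le_ncard hsub (Set.toFinite _)
    _ ≤ ∑ H ∈ S, (⋃ K ∈ (hofin H).toFinset, fixSet Ω K).ncard := ncard_biUnion_le S _
    _ ≤ ∑ H ∈ S, Nat.card (orbit ↥M H) * BG.nFix G Ω H := by
        refine Finset.sum_le_sum fun H hH => ?_
        calc (⋃ K ∈ (hofin H).toFinset, fixSet Ω K).ncard
            ≤ ∑ K ∈ (hofin H).toFinset, (fixSet Ω K).ncard := ncard_biUnion_le _ _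
          _ = ∑ K ∈ (hofin H).toFinset, (fixSet Ω H).ncard :=
              Finset.sum_congr rfl fun K hK =>
                ncard_fixSet_orbit ((hofin H).mem_toFinset.mp hK)
          _ = (hofin H).toFinset.card * (fixSet Ω H).ncard := by
              rw [Finset.sum_const, smul_eq_mul]
          _ = Nat.card (orbit ↥M H) * BG.nFix G Ω H := by
              rw [nFix_eq, Nat.card_coe_set_eq, Set.ncard_eq_toFinset_card _ (hofin H)]

end BGAux


/-- If `Q̌(G) < 1/2` then any two vertices of the Saxl graph have a
common neighbour. -/
theorem common_neighbour_of_Qcheck_lt_half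
    (G : Type) [Group G] [Finite G] (Ω : Type) [MulAction G Ω] [Finite Ω]
    [MulAction.IsPretransitive G Ω] (α : Ω) (M : Subgroup G)
    (hM : MulAction.stabilizer G α = M)
    (S : Finset (Subgroup G)) (hS : BG.IsPrimeOrderClassReps G M S)
    (hQ : BG.Qcheck G Ω M S < 1 / 2) :
    ∀ a b : Ω, ∃ c : Ω,
      MulAction.stabilizer G a ⊓ MulAction.stabilizer G c = ⊥ ∧
      MulAction.stabilizer G b ⊓ MulAction.stabilizer G c = ⊥ := by
  classical
  haveI : Nonempty Ω := ⟨α⟩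
  have hΩpos : 0 < Nat.card Ω := Nat.card_pos
  have hΩQ : (0 : ℚ) < (Nat.card Ω : ℚ) := by exact_mod_cast hΩpos
  -- Step 1: termwise rational bound
  have hstep : ∀ H ∈ S,
      ((Nat.card (MulAction.orbit ↥M H) * BG.nFix G Ω H : ℕ) : ℚ) ≤
        (Nat.card ↥M : ℚ) *
          (((Nat.card ↥H : ℚ) - 1) * (BG.nFix G Ω H : ℚ) /
            (Nat.card ↥(M ⊓ Subgroup.normalizer (H : Set G)) : ℚ)) := by
    intro H hH
    have hp : (Nat.card ↥H).Prime := (hS.1 H hH).2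
    have h2 : (1 : ℚ) ≤ (Nat.card ↥H : ℚ) - 1 := by
      have := hp.two_le
      have : (2 : ℚ) ≤ (Nat.card ↥H : ℚ) := by exact_mod_cast this
      linarith
    have hnpos : (0 : ℚ) < (Nat.card ↥(M ⊓ Subgroup.normalizer (H : Set G)) : ℚ) := by
      exact_mod_cast (Nat.card_pos (α := ↥(M ⊓ Subgroup.normalizer (H : Set G))))
    have horb := BGAux.card_orbit_mul M H
    have horbQ : (Nat.card (MulAction.orbit ↥M H) : ℚ) =
        (Nat.card ↥M : ℚ) / (Nat.card ↥(M ⊓ Subgroup.normalizer (H : Set G)) : ℚ) := by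
      rw [eq_div_iff (ne_of_gt hnpos)]
      exact_mod_cast horb
    have hF : (0 : ℚ) ≤ (BG.nFix G Ω H : ℚ) := by positivity
    have hM0 : (0 : ℚ) ≤ (Nat.card ↥M : ℚ) := by positivity
    push_cast
    rw [horbQ]
    have hX : (0 : ℚ) ≤ (Nat.card ↥M : ℚ) * (BG.nFix G Ω H : ℚ) /
        (Nat.card ↥(M ⊓ Subgroup.normalizer (H : Set G)) : ℚ) := by positivity
    calc (Nat.card ↥M : ℚ) / (Nat.card ↥(M ⊓ Subgroup.normalizer (H : Set G)) : ℚ) * (BG.nFix G Ω H : ℚ)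
        = 1 * ((Nat.card ↥M : ℚ) * (BG.nFix G Ω H : ℚ) /
            (Nat.card ↥(M ⊓ Subgroup.normalizer (H : Set G)) : ℚ)) := by ring
      _ ≤ ((Nat.card ↥H : ℚ) - 1) * ((Nat.card ↥M : ℚ) * (BG.nFix G Ω H : ℚ) /
            (Nat.card ↥(M ⊓ Subgroup.normalizer (H : Set G)) : ℚ)) := mul_le_mul_of_nonneg_right h2 hX
      _ = (Nat.card ↥M : ℚ) * (((Nat.card ↥H : ℚ) - 1) * (BG.nFix G Ω H : ℚ) /
            (Nat.card ↥(M ⊓ Subgroup.normalizer (H : Set G)) : ℚ)) := by ring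
  -- Step 2: the bad set at α is small
  have hbadα : ((BGAux.Bad G α).ncard : ℚ) ≤ BG.Qcheck G Ω M S * (Nat.card Ω : ℚ) := by
    have h1 := BGAux.ncard_bad_le (Ω := Ω) α M hM S hS
    calc ((BGAux.Bad G α).ncard : ℚ)
        ≤ ((∑ H ∈ S, Nat.card (MulAction.orbit ↥M H) * BG.nFix G Ω H : ℕ) : ℚ) := by
          exact_mod_cast h1
      _ ≤ ∑ H ∈ S, (Nat.card ↥M : ℚ) *
            (((Nat.card ↥H : ℚ) - 1) * (BG.nFix G Ω H : ℚ) /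
              (Nat.card ↥(M ⊓ Subgroup.normalizer (H : Set G)) : ℚ)) := by
          rw [Nat.cast_sum]
          exact Finset.sum_le_sum hstep
      _ = BG.Qcheck G Ω M S * (Nat.card Ω : ℚ) := by
          rw [BG.Qcheck, ← Finset.mul_sum, div_mul_eq_mul_div, div_mul_cancel₀ _ (ne_of_gt hΩQ)]
  have hhalf : 2 * (BGAux.Bad G α).ncard < Nat.card Ω := by
    have h2 : BG.Qcheck G Ω M S * (Nat.card Ω : ℚ) < (1 / 2) * (Nat.card Ω : ℚ) :=
      mul_lt_mul_of_pos_right hQ hΩQ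
    have h3 : ((2 * (BGAux.Bad G α).ncard : ℕ) : ℚ) < (Nat.card Ω : ℚ) := by
      push_cast
      linarith
    exact_mod_cast h3
  -- Step 3: invariance of the bad set cardinality
  have hinv : ∀ x : Ω, (BGAux.Bad G x).ncard = (BGAux.Bad G α).ncard := by
    intro x
    obtain ⟨g, hg⟩ := MulAction.exists_smul_eq G α x
    rw [← hg, BGAux.ncard_bad_smul]
  -- Step 4: conclude
  intro a b
  by_contra hc
  push_neg at hc
  have hsub : (Set.univ : Set Ω) ⊆ BGAux.Bad G a ∪ BGAux.Bad G b := by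
    intro c _
    by_cases hca : MulAction.stabilizer G a ⊓ MulAction.stabilizer G c = ⊥
    · exact Or.inr (hc c hca)
    · exact Or.inl hca
  have hcard : Nat.card Ω ≤ 2 * (BGAux.Bad G α).ncard := by
    calc Nat.card Ω = (Set.univ : Set Ω).ncard := (Set.ncard_univ Ω).symm
      _ ≤ (BGAux.Bad G a ∪ BGAux.Bad G b).ncard :=
          Set.ncard_le_ncard hsub (Set.toFinite _)
      _ ≤ (BGAux.Bad G a).ncard + (BGAux.Bad G b).ncard := Set.ncard_union_le _ _
      _ = 2 * (BGAux.Bad G α).ncard := by rw [hinv a, hinv b]; ring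
  omega
end

section
/- Let G and G₀ be finite primitive permutation groups on the same set Ω with b(G) = b(G₀) = 2, where G₀ is a subgroup of G and the point stabilizer (G₀)_α is contained in G_α for some α ∈ Ω. Let Γ and Γ₀ denote the unions of the regular suborbits of G and of G₀ relative to α, respectively. If Γ ∩ Γ^g ≠ ∅ for all g ∈ G, then Γ₀ ∩ Γ₀^h ≠ ∅ for all h ∈ G₀. (Indeed Γ ⊆ Γ₀.) -/
open Matrix MulAction

/-- If the BG-conjecture holds for `G`, it holds for a subgroup `G₀`
of `G` (both primitive of base size two); indeed `Γ ⊆ Γ₀`. -/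
theorem BG_of_subgroup
    (G : Type) [Group G] [Finite G] (Ω : Type) [MulAction G Ω]
    (G₀ : Subgroup G) (α : Ω)
    (hprim : BG.IsPrimitiveAction G Ω) (hprim₀ : BG.IsPrimitiveAction ↥G₀ Ω)
    (hb : BG.BaseSizeTwo G Ω) (hb₀ : BG.BaseSizeTwo ↥G₀ Ω)
    (hBG : ∀ g : G, ∃ γ, γ ∈ BG.SaxlNbr G Ω α ∧ γ ∈ (fun x => g • x) '' BG.SaxlNbr G Ω α) :
    BG.SaxlNbr G Ω α ⊆ BG.SaxlNbr ↥G₀ Ω α ∧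
    ∀ h : ↥G₀, ∃ γ, γ ∈ BG.SaxlNbr ↥G₀ Ω α ∧
      γ ∈ (fun x => h • x) '' BG.SaxlNbr ↥G₀ Ω α := by
  have hsub : BG.SaxlNbr G Ω α ⊆ BG.SaxlNbr ↥G₀ Ω α := by
    intro β hβ
    simp only [BG.SaxlNbr, Set.mem_setOf_eq] at *
    rw [Subgroup.eq_bot_iff_forall]
    intro g hg
    simp only [Subgroup.mem_inf, MulAction.mem_stabilizer_iff] at hg
    have : (g : G) ∈ MulAction.stabilizer G α ⊓ MulAction.stabilizer G β := by
      simp only [Subgroup.mem_inf, MulAction.mem_stabilizer_iff]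
      exact hg
    rw [hβ, Subgroup.mem_bot] at this
    exact Subtype.ext this
  refine ⟨hsub, fun h => ?_⟩
  obtain ⟨γ, hγ, x, hx, hxy⟩ := hBG (h : G)
  exact ⟨γ, hsub hγ, x, hsub hx, hxy⟩
end
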